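/- Let $n, p$ be positive natural numbers, $k_x \in \mathbb{R}^{n \times n}$, $k_\theta \in \mathbb{R}$, $S \in \mathbb{R}^{p \times p}$, and let $\Gamma \in \mathbb{R}^{p \times p}$ be symmetric and invertible. Let $Y : \mathbb{R} \to \mathbb{R}^{n \times p}$ be any matrix-valued function, and let $\tilde{x} : \mathbb{R} \to \mathbb{R}^n$ and $\tilde{\theta} : \mathbb{R} \to \mathbb{R}^p$ be differentiable functions satisfying, for all $t$, $\tilde{x}'(t) = Y(t)\tilde{\theta}(t) - k_x \tilde{x}(t)$ and $\tilde{\theta}'(t) = -\Gamma\,Y(t)^{\mathsf T}\tilde{x}(t) - k_\theta\,\Gamma\,S\,\tilde{\theta}(t)$. Then the function $V_0(t) = \tfrac{1}{2}\tilde{x}(t)^{\mathsf T}\tilde{x}(t) + \tfrac{1}{2}\tilde{\theta}(t)^{\mathsf T}\Gamma^{-1}\tilde{\theta}(t)$ is differentiable with $V_0'(t) = -\tilde{x}(t)^{\mathsf T} k_x \tilde{x}(t) - k_\theta\,\tilde{\theta}(t)^{\mathsf T} S\,\tilde{\theta}(t)$ for all $t$. -/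

import Mathlib

open Matrix

private lemma hasDerivAt_dot {m : ℕ} {u v : ℝ → Fin m → ℝ} {u' v' : Fin m → ℝ} {t : ℝ}
    (hu : HasDerivAt u u' t) (hv : HasDerivAt v v' t) :
    HasDerivAt (fun τ => u τ ⬝ᵥ v τ) (u' ⬝ᵥ v t + u t ⬝ᵥ v') t := by
  have h : ∀ i ∈ Finset.univ, HasDerivAt (fun τ => u τ i * v τ i)
      (u' i * v t i + u t i * v' i) t :=
    fun i _ => ((hasDerivAt_pi.mp hu) i).mul ((hasDerivAt_pi.mp hv) i)
  have := HasDerivAt.fun_sum h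
  simpa [dotProduct, Finset.sum_add_distrib] using this

private lemma hasDerivAt_mulVec {m k : ℕ} (A : Matrix (Fin m) (Fin k) ℝ)
    {f : ℝ → Fin k → ℝ} {f' : Fin k → ℝ} {t : ℝ} (hf : HasDerivAt f f' t) :
    HasDerivAt (fun τ => A *ᵥ f τ) (A *ᵥ f') t := by
  rw [hasDerivAt_pi]
  intro i
  simp only [mulVec, dotProduct]
  exact HasDerivAt.fun_sum fun j _ => ((hasDerivAt_pi.mp hf) j).const_mul (A i j)

/-- Derivative of the identifier Lyapunov function `V₀ = ½ x̃ᵀx̃ + ½ θ̃ᵀ Γ⁻¹ θ̃` along the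
identification error dynamics `x̃' = Y θ̃ - kₓ x̃` and the concurrent-learning error dynamics
`θ̃' = -Γ Yᵀ x̃ - k_θ Γ S θ̃`:  `V₀' = -x̃ᵀ kₓ x̃ - k_θ θ̃ᵀ S θ̃`. -/
theorem statement2 (n p : ℕ) (hn : 0 < n) (hp : 0 < p)
    (kx : Matrix (Fin n) (Fin n) ℝ) (kθ : ℝ)
    (S : Matrix (Fin p) (Fin p) ℝ)
    (Γ : Matrix (Fin p) (Fin p) ℝ) (hΓsymm : Γ.IsSymm) (hΓinv : IsUnit Γ.det)
    (Y : ℝ → Matrix (Fin n) (Fin p) ℝ)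
    (xTilde : ℝ → Fin n → ℝ) (θTilde : ℝ → Fin p → ℝ)
    (hx : ∀ t : ℝ, HasDerivAt xTilde (Y t *ᵥ θTilde t - kx *ᵥ xTilde t) t)
    (hθ : ∀ t : ℝ, HasDerivAt θTilde
      (-(Γ *ᵥ ((Y t)ᵀ *ᵥ xTilde t)) - kθ • (Γ *ᵥ (S *ᵥ θTilde t))) t) :
    ∀ t : ℝ, HasDerivAt
      (fun τ => (1 / 2) * (xTilde τ ⬝ᵥ xTilde τ) + (1 / 2) * (θTilde τ ⬝ᵥ Γ⁻¹ *ᵥ θTilde τ))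
      (-(xTilde t ⬝ᵥ kx *ᵥ xTilde t) - kθ * (θTilde t ⬝ᵥ S *ᵥ θTilde t)) t := by
  intro t
  set x := xTilde t
  set θ := θTilde t
  set x' := Y t *ᵥ θTilde t - kx *ᵥ xTilde t with hx'
  set θ' := -(Γ *ᵥ ((Y t)ᵀ *ᵥ xTilde t)) - kθ • (Γ *ᵥ (S *ᵥ θTilde t)) with hθ'
  have h1 : HasDerivAt (fun τ => xTilde τ ⬝ᵥ xTilde τ) (x' ⬝ᵥ x + x ⬝ᵥ x') t :=
    hasDerivAt_dot (hx t) (hx t)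
  have h2 : HasDerivAt (fun τ => θTilde τ ⬝ᵥ Γ⁻¹ *ᵥ θTilde τ)
      (θ' ⬝ᵥ Γ⁻¹ *ᵥ θ + θ ⬝ᵥ Γ⁻¹ *ᵥ θ') t :=
    hasDerivAt_dot (hθ t) (hasDerivAt_mulVec Γ⁻¹ (hθ t))
  have h := (h1.const_mul (1/2 : ℝ)).add (h2.const_mul (1/2 : ℝ))
  refine h.congr_deriv ?_
  -- algebraic identity
  have hΓinvsymm : Γ⁻¹ᵀ = Γ⁻¹ := by
    rw [Matrix.transpose_nonsing_inv, hΓsymm.eq]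
  have hcancel : ∀ v : Fin p → ℝ, Γ⁻¹ *ᵥ (Γ *ᵥ v) = v := by
    intro v
    rw [Matrix.mulVec_mulVec, Matrix.nonsing_inv_mul _ hΓinv, Matrix.one_mulVec]
  have e1 : θ' ⬝ᵥ Γ⁻¹ *ᵥ θ = θ ⬝ᵥ Γ⁻¹ *ᵥ θ' := by
    rw [dotProduct_comm, dotProduct_mulVec, ← Matrix.vecMul_transpose, hΓinvsymm]
  have hΓθ' : Γ⁻¹ *ᵥ θ' = -((Y t)ᵀ *ᵥ xTilde t) - kθ • (S *ᵥ θTilde t) := by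
    rw [hθ']
    rw [Matrix.mulVec_sub, Matrix.mulVec_neg, Matrix.mulVec_smul, hcancel, hcancel]
  have hcross : x ⬝ᵥ (Y t *ᵥ θTilde t) = θ ⬝ᵥ ((Y t)ᵀ *ᵥ xTilde t) := by
    rw [dotProduct_mulVec,
      show x ᵥ* Y t = (Y t)ᵀ *ᵥ x from by
        rw [← Matrix.transpose_transpose (Y t), Matrix.vecMul_transpose,
          Matrix.transpose_transpose],
      dotProduct_comm]
  rw [dotProduct_comm x' x, e1, hΓθ', hx']
  simp only [dotProduct_sub, dotProduct_neg, dotProduct_smul, smul_eq_mul, hcross]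
  ring
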